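/- arXiv:1901.08028 — 3 statements merged into one kernel-verified Lean document; each statement's English description precedes it below -/
import Mathlib

section
/- Let z_1, ..., z_n be points of the open unit disc, with n ≥ 1, and let x ∈ ℂ with |x| = 1. Then ∏_{i=1}^n (x - z_i) ≠ 0 and the derivative ∑_{i=1}^n ∏_{j≠i}(x - z_j) ≠ 0. -/
open Finset

/-- If `z₁, …, zₙ` (with `n ≥ 1`) lie in the open unit disc and `|x| = 1`,
then `∏ᵢ (x - zᵢ) ≠ 0` and `∑ᵢ ∏_{j≠i} (x - zⱼ) ≠ 0`. -/
theorem stmt_3 (n : ℕ) (hn : 1 ≤ n) (z : Fin n → ℂ)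
    (hz : ∀ i, ‖z i‖ < 1) (x : ℂ) (hx : ‖x‖ = 1) :
    (∏ i, (x - z i)) ≠ 0 ∧
    (∑ i, ∏ j ∈ Finset.univ.erase i, (x - z j)) ≠ 0 := by
  have hne : ∀ i, x - z i ≠ 0 := by
    intro i h
    rw [sub_eq_zero] at h
    rw [h] at hx
    exact absurd hx (ne_of_lt (hz i))
  have hP : (∏ i, (x - z i)) ≠ 0 := Finset.prod_ne_zero_iff.mpr fun i _ => hne i
  refine ⟨hP, ?_⟩
  have key : (∑ i, ∏ j ∈ Finset.univ.erase i, (x - z j))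
      = (∏ i, (x - z i)) * ∑ i, (x - z i)⁻¹ := by
    rw [Finset.mul_sum]
    refine Finset.sum_congr rfl fun i _ => ?_
    rw [← Finset.prod_erase_mul Finset.univ _ (Finset.mem_univ i)]
    rw [mul_inv_cancel_right₀ (hne i)]
  rw [key]
  refine mul_ne_zero hP ?_
  have hre : ∀ i, 0 < (x * (x - z i)⁻¹).re := by
    intro i
    rw [Complex.inv_def, ← mul_assoc]
    have hpos : 0 < Complex.normSq (x - z i) := Complex.normSq_pos.mpr (hne i)
    have h1 : (x * (starRingEnd ℂ) (x - z i)).re = 1 - (x * (starRingEnd ℂ) (z i)).re := by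
      rw [map_sub, mul_sub, Complex.sub_re, Complex.mul_conj]
      simp [Complex.normSq_eq_norm_sq, hx]
    have h2 : (x * (starRingEnd ℂ) (z i)).re < 1 := by
      calc (x * (starRingEnd ℂ) (z i)).re ≤ ‖x * (starRingEnd ℂ) (z i)‖ :=
            Complex.re_le_norm _
        _ = ‖z i‖ := by simp [hx]
        _ < 1 := hz i
    have h3 : 0 < (x * (starRingEnd ℂ) (x - z i)).re := by rw [h1]; linarith
    rw [Complex.mul_re]
    simp only [Complex.ofReal_re, Complex.ofReal_im, mul_zero, sub_zero]
    positivity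
  intro h0
  have hsum : 0 < (∑ i, x * (x - z i)⁻¹).re := by
    rw [Complex.re_sum]
    exact Finset.sum_pos (fun i _ => hre i)
      (Finset.univ_nonempty_iff.mpr (Fin.pos_iff_nonempty.mp hn))
  rw [← Finset.mul_sum, h0, mul_zero] at hsum
  simp at hsum
end

section
/- Let n be an odd positive integer and let z_1, ..., z_n lie in the open unit disc. Then there is no continuous function y : S¹ → ℂ (where S¹ = {x ∈ ℂ : |x| = 1}) satisfying y(x)² = ∏_{i=1}^n (x - z_i) for all x ∈ S¹. -/
open Finset

private lemma S1_preconn : PreconnectedSpace {x : ℂ // ‖x‖ = 1} := by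
  have h : IsPreconnected {x : ℂ | ‖x‖ = 1} := by
    have he : {x : ℂ | ‖x‖ = 1} = Metric.sphere (0 : ℂ) 1 := by
      ext x; simp [Complex.dist_eq]
    rw [he]
    exact (isConnected_sphere (by rw [Complex.rank_real_complex]; norm_num) 0
      zero_le_one).isPreconnected
  exact Subtype.preconnectedSpace h

private lemma no_sqrt_id :
    ¬ ∃ u : {x : ℂ // ‖x‖ = 1} → ℂ,
      Continuous u ∧ ∀ p : {x : ℂ // ‖x‖ = 1}, u p ^ 2 = (p : ℂ) := by
  rintro ⟨u, hu, hsq⟩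
  haveI := S1_preconn
  have hne : ∀ p : {x : ℂ // ‖x‖ = 1}, (p : ℂ) ≠ 0 := by
    intro p hp
    have h2 := p.2
    rw [hp] at h2; simp at h2
  have hu0 : ∀ p, u p ≠ 0 := by
    intro p h
    have h2 := hsq p
    rw [h] at h2; simp at h2
    exact hne p h2.symm
  set neg : {x : ℂ // ‖x‖ = 1} → {x : ℂ // ‖x‖ = 1} :=
    fun p => ⟨-(p : ℂ), by simpa using p.2⟩ with hnegdef
  have hnegc : Continuous neg := Continuous.subtype_mk (continuous_subtype_val.neg) _
  set v : {x : ℂ // ‖x‖ = 1} → ℂ := fun p => u (neg p) / u p with hvdef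
  have hvc : Continuous v := (hu.comp hnegc).div hu fun p => hu0 p
  have hv2 : ∀ p, v p ^ 2 = -1 := by
    intro p
    have h1 : u (neg p) ^ 2 = -(p : ℂ) := hsq (neg p)
    have h2 : u p ^ 2 = (p : ℂ) := hsq p
    have : v p ^ 2 = -(p : ℂ) / (p : ℂ) := by
      rw [hvdef]; simp only [div_pow, h1, h2]
    rw [this, neg_div, div_self (hne p)]
  have hvI : ∀ p, v p = Complex.I ∨ v p = -Complex.I := by
    intro p
    have h : (v p - Complex.I) * (v p + Complex.I) = 0 := by
      have := hv2 p
      have hI : Complex.I ^ 2 = -1 := Complex.I_sq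
      calc (v p - Complex.I) * (v p + Complex.I) = v p ^ 2 - Complex.I ^ 2 := by ring
        _ = 0 := by rw [this, hI]; ring
    rcases mul_eq_zero.mp h with h | h
    · exact Or.inl (sub_eq_zero.mp h)
    · exact Or.inr (eq_neg_of_add_eq_zero_left h)
  -- the imaginary part is a continuous function with values in {1, -1}, hence constant
  have hw : ∀ p, (v p).im = 1 ∨ (v p).im = -1 := by
    intro p
    rcases hvI p with h | h <;> rw [h] <;> simp
  have hconst : (∀ p, v p = Complex.I) ∨ (∀ p, v p = -Complex.I) := by
    by_cases hall : ∀ p, v p = Complex.I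
    · exact Or.inl hall
    · right
      push_neg at hall
      obtain ⟨q, hq⟩ := hall
      have hq' : v q = -Complex.I := (hvI q).resolve_left hq
      intro p
      by_contra hp
      have hp' : v p = Complex.I := (hvI p).resolve_right hp
      have hcont : Continuous fun r => (v r).im := Complex.continuous_im.comp hvc
      have h0 : (0 : ℝ) ∈ Set.Icc ((v q).im) ((v p).im) := by
        rw [hp', hq']; simp
      obtain ⟨r, hr⟩ := intermediate_value_univ q p hcont h0
      have hr' : (v r).im = 0 := hr
      rcases hw r with h | h <;> rw [hr'] at h <;> norm_num at h
  have hfin : ∀ c : ℂ, c ^ 2 = -1 → (∀ p, v p = c) → False := by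
    intro c hc hall
    obtain ⟨p⟩ : Nonempty {x : ℂ // ‖x‖ = 1} := ⟨⟨1, by simp⟩⟩
    have h1 : u (neg p) = c * u p := by
      have h := hall p
      rw [hvdef] at h
      exact (div_eq_iff (hu0 p)).mp h
    have h2 : u (neg (neg p)) = c * u (neg p) := by
      have h := hall (neg p)
      rw [hvdef] at h
      exact (div_eq_iff (hu0 (neg p))).mp h
    have hnn : neg (neg p) = p := by
      apply Subtype.ext; simp [hnegdef]
    rw [hnn, h1] at h2
    have : u p = -u p := by linear_combination h2 + u p * hc
    have h0 : u p = 0 := by linear_combination (1/2 : ℂ) * this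
    exact hu0 p h0
  rcases hconst with h | h
  · exact hfin Complex.I Complex.I_sq h
  · exact hfin (-Complex.I) (by linear_combination Complex.I_sq) h

/-- For odd `n` and `z₁, …, zₙ` in the open unit disc, there is no continuous
function `y : S¹ → ℂ` with `y(x)² = ∏ᵢ (x - zᵢ)` for all `x ∈ S¹`. -/
theorem stmt_5 (n : ℕ) (hn : Odd n) (z : Fin n → ℂ)
    (hz : ∀ i, ‖z i‖ < 1) :
    ¬ ∃ y : {x : ℂ // ‖x‖ = 1} → ℂ,
      Continuous y ∧ ∀ x : {x : ℂ // ‖x‖ = 1},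
        (y x) ^ 2 = ∏ i, ((x : ℂ) - z i) := by
  rintro ⟨y, hy, hsq⟩
  obtain ⟨m, hm⟩ := hn
  have hne : ∀ p : {x : ℂ // ‖x‖ = 1}, (p : ℂ) ≠ 0 := by
    intro p hp
    have h2 := p.2
    rw [hp] at h2; simp at h2
  -- each factor 1 - zᵢ/p has positive real part
  have hre : ∀ (p : {x : ℂ // ‖x‖ = 1}) (i : Fin n),
      0 < (1 - z i / (p : ℂ)).re := by
    intro p i
    have habs : ‖z i / (p : ℂ)‖ = ‖z i‖ := by
      rw [norm_div, p.2, div_one]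
    have hle : (z i / (p : ℂ)).re ≤ ‖z i‖ := by
      rw [← habs]; exact Complex.re_le_norm _
    rw [Complex.sub_re, Complex.one_re]
    linarith [hz i]
  have hw0 : ∀ (p : {x : ℂ // ‖x‖ = 1}) (i : Fin n),
      (1 - z i / (p : ℂ)) ≠ 0 := by
    intro p i h
    have := hre p i
    rw [h] at this; simp at this
  -- the principal square roots
  set s : {x : ℂ // ‖x‖ = 1} → Fin n → ℂ :=
    fun p i => (1 - z i / (p : ℂ)) ^ ((1 : ℂ) / 2) with hsdef
  have hs2 : ∀ p i, s p i ^ 2 = 1 - z i / (p : ℂ) := by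
    intro p i
    rw [hsdef]
    rw [sq, ← Complex.cpow_add _ _ (hw0 p i)]
    norm_num
  have hs0 : ∀ p i, s p i ≠ 0 := by
    intro p i h
    have := hs2 p i
    rw [h] at this
    simp at this
    exact hw0 p i this.symm
  set g : {x : ℂ // ‖x‖ = 1} → ℂ := fun p => ∏ i, s p i with hgdef
  have hg2 : ∀ p, g p ^ 2 = ∏ i, (1 - z i / (p : ℂ)) := by
    intro p
    rw [hgdef, ← Finset.prod_pow]
    exact Finset.prod_congr rfl fun i _ => hs2 p i
  have hg0 : ∀ p, g p ≠ 0 := fun p =>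
    Finset.prod_ne_zero_iff.mpr fun i _ => hs0 p i
  have hgc : Continuous g := by
    apply continuous_finset_prod
    intro i _
    apply Continuous.cpow _ continuous_const
    · intro p
      rw [Complex.mem_slitPlane_iff]
      exact Or.inl (hre p i)
    · exact continuous_const.sub
        (continuous_const.div continuous_subtype_val fun p => hne p)
  have hP : ∀ p : {x : ℂ // ‖x‖ = 1},
      ∏ i, ((p : ℂ) - z i) = (p : ℂ) ^ n * ∏ i, (1 - z i / (p : ℂ)) := by
    intro p
    have h1 : ∀ i : Fin n, (p : ℂ) - z i = (p : ℂ) * (1 - z i / (p : ℂ)) := by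
      intro i
      rw [mul_sub, mul_one, mul_div_cancel₀ _ (hne p)]
    calc ∏ i, ((p : ℂ) - z i) = ∏ i : Fin n, ((p : ℂ) * (1 - z i / (p : ℂ))) :=
          Finset.prod_congr rfl fun i _ => h1 i
      _ = (∏ _i : Fin n, (p : ℂ)) * ∏ i, (1 - z i / (p : ℂ)) :=
          Finset.prod_mul_distrib
      _ = (p : ℂ) ^ n * ∏ i, (1 - z i / (p : ℂ)) := by
          rw [Finset.prod_const, Finset.card_univ, Fintype.card_fin]
  apply no_sqrt_id
  refine ⟨fun p => y p / ((p : ℂ) ^ m * g p), ?_, ?_⟩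
  · exact hy.div ((continuous_subtype_val.pow m).mul hgc)
      fun p => mul_ne_zero (pow_ne_zero m (hne p)) (hg0 p)
  · intro p
    have hd : (p : ℂ) ^ m * g p ≠ 0 := mul_ne_zero (pow_ne_zero m (hne p)) (hg0 p)
    have hW : (∏ i, (1 - z i / (p : ℂ))) ≠ 0 :=
      Finset.prod_ne_zero_iff.mpr fun i _ => hw0 p i
    have hpn : (p : ℂ) ^ n = (p : ℂ) ^ (m * 2) * (p : ℂ) := by
      rw [hm]; ring
    rw [div_pow, hsq p, hP p, mul_pow, ← pow_mul, hg2 p,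
      div_eq_iff (mul_ne_zero (pow_ne_zero _ (hne p)) hW), hpn]
    ring
end

section
/- Let n be an odd positive integer. Consider the space T_n = {({z_1,...,z_n}, x, y) : z_i ∈ 𝔻 distinct, x ∈ closure(𝔻), y ∈ ℂ, y² = ∏(x - z_i), y ≠ 0} and the double cover Sq : T_n → C_{n,1}(closure 𝔻) forgetting y. Then the nontrivial deck transformation ε : T_n → T_n, ε(q, x, y) = (q, x, -y), is homotopic to the identity of T_n. -/
open Finset

/-- The ordered model of the space `T_n`: tuples `(z, x, y)` with the `z i`
pairwise distinct points of the open unit disc, `x` in the closed unit disc,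
`y ≠ 0` and `y² = ∏ᵢ (x - zᵢ)`. -/
def TnOrdered (n : ℕ) : Set ((Fin n → ℂ) × ℂ × ℂ) :=
  {p | Function.Injective p.1 ∧ (∀ i, ‖p.1 i‖ < 1) ∧
    ‖p.2.1‖ ≤ 1 ∧ p.2.2 ≠ 0 ∧ p.2.2 ^ 2 = ∏ i, (p.2.1 - p.1 i)}

/-- Two points of the ordered model are identified when they differ by a
relabelling of the configuration points. -/
def TnSetoid (n : ℕ) : Setoid (TnOrdered n) where
  r p q := (∃ σ : Equiv.Perm (Fin n), (p : (Fin n → ℂ) × ℂ × ℂ).1 ∘ σ =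
      (q : (Fin n → ℂ) × ℂ × ℂ).1) ∧
    (p : (Fin n → ℂ) × ℂ × ℂ).2 = (q : (Fin n → ℂ) × ℂ × ℂ).2
  iseqv := by
    constructor
    · exact fun p => ⟨⟨Equiv.refl _, rfl⟩, rfl⟩
    · rintro p q ⟨⟨σ, hσ⟩, h2⟩
      refine ⟨⟨σ.symm, ?_⟩, h2.symm⟩
      funext i
      have := congrFun hσ (σ.symm i)
      simpa using this.symm
    · rintro p q r ⟨⟨σ, hσ⟩, h2⟩ ⟨⟨τ, hτ⟩, h2'⟩
      refine ⟨⟨τ.trans σ, ?_⟩, h2.trans h2'⟩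
      funext i
      have h1 := congrFun hσ (τ i)
      have h3 := congrFun hτ i
      simpa using h1.trans h3

/-- The space `T_n` of triples `({z₁,…,zₙ}, x, y)` with the `zᵢ` distinct
points of the open unit disc, `x` in the closed unit disc, `y ≠ 0` and
`y² = ∏ᵢ (x - zᵢ)`; the configuration `{z₁,…,zₙ}` is unordered. It carries
the quotient topology. -/
def Tn (n : ℕ) : Type := Quotient (TnSetoid n)

noncomputable instance (n : ℕ) : TopologicalSpace (Tn n) := by
  unfold Tn; infer_instance

/-- The nontrivial deck transformation `ε` of the double cover
`Sq : T_n → C_{n,1}(𝔻̄)`, given by `(q, x, y) ↦ (q, x, -y)`, on the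
ordered model. -/
def epsOrdered (n : ℕ) : TnOrdered n → TnOrdered n := fun p =>
  ⟨(p.1.1, p.1.2.1, -p.1.2.2), p.2.1, p.2.2.1, p.2.2.2.1,
    neg_ne_zero.mpr p.2.2.2.2.1, by
      have := p.2.2.2.2.2
      simpa [neg_sq] using this⟩

/-- The deck transformation `ε : T_n → T_n`, `(q, x, y) ↦ (q, x, -y)`. -/
def eps (n : ℕ) : Tn n → Tn n :=
  Quotient.map (epsOrdered n)
    (by rintro p q ⟨⟨σ, hσ⟩, h2⟩
        exact ⟨⟨σ, hσ⟩, by simp [epsOrdered, Prod.ext_iff] at h2 ⊢; tauto⟩)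

theorem eps_continuous (n : ℕ) : Continuous (eps n) := by
  apply Continuous.quotient_map'
  · exact Continuous.subtype_mk
      (by fun_prop : Continuous fun p : TnOrdered n =>
        ((p : (Fin n → ℂ) × ℂ × ℂ).1, (p : (Fin n → ℂ) × ℂ × ℂ).2.1,
          -(p : (Fin n → ℂ) × ℂ × ℂ).2.2)) _

/-- `ε` as a continuous map. -/
def epsMap (n : ℕ) : C(Tn n, Tn n) := ⟨eps n, eps_continuous n⟩

/-! ### Auxiliary material -/

/-- The action of a permutation on the ordered model. -/
def permAct (n : ℕ) (σ : Equiv.Perm (Fin n)) : TnOrdered n → TnOrdered n := fun p =>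
  ⟨(p.1.1 ∘ σ, p.1.2), p.2.1.comp σ.injective, fun i => p.2.2.1 (σ i), p.2.2.2.1,
    p.2.2.2.2.1, by
      have := p.2.2.2.2.2
      simpa [Equiv.prod_comp σ (fun j => (p.1.2.1 - p.1.1 j))] using this⟩

lemma permAct_comp (n : ℕ) (σ τ : Equiv.Perm (Fin n)) (p : TnOrdered n) :
    permAct n σ (permAct n τ p) = permAct n (σ.trans τ) p := by
  apply Subtype.ext
  simp [permAct, Function.comp_def]

lemma permAct_continuous (n : ℕ) (σ : Equiv.Perm (Fin n)) : Continuous (permAct n σ) := by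
  apply Continuous.subtype_mk
  exact (by fun_prop : Continuous fun p : TnOrdered n =>
    ((p : (Fin n → ℂ) × ℂ × ℂ).1 ∘ σ, (p : (Fin n → ℂ) × ℂ × ℂ).2))

lemma permAct_left_inv (n : ℕ) (σ : Equiv.Perm (Fin n)) (p : TnOrdered n) :
    permAct n σ.symm (permAct n σ p) = p := by
  rw [permAct_comp]
  apply Subtype.ext
  ext i <;> simp [permAct]

/-- `permAct` as a homeomorphism. -/
def permHomeo (n : ℕ) (σ : Equiv.Perm (Fin n)) : TnOrdered n ≃ₜ TnOrdered n where
  toFun := permAct n σ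
  invFun := permAct n σ.symm
  left_inv := permAct_left_inv n σ
  right_inv := fun p => by simpa using permAct_left_inv n σ.symm p
  continuous_toFun := permAct_continuous n σ
  continuous_invFun := permAct_continuous n σ.symm

lemma rel_iff_permAct (n : ℕ) (p q : TnOrdered n) :
    (TnSetoid n).r p q ↔ ∃ σ : Equiv.Perm (Fin n), permAct n σ p = q := by
  constructor
  · rintro ⟨⟨σ, hσ⟩, h2⟩
    exact ⟨σ, Subtype.ext (Prod.ext hσ h2)⟩
  · rintro ⟨σ, rfl⟩
    exact ⟨⟨σ, rfl⟩, rfl⟩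

/-- The quotient map `TnOrdered n → Tn n` is an open quotient map. -/
lemma isOpenQuotientMap_mk (n : ℕ) :
    IsOpenQuotientMap (Quotient.mk (TnSetoid n)) := by
  refine ⟨Quotient.exists_rep, continuous_quotient_mk', ?_⟩
  intro U hU
  rw [isQuotientMap_quotient_mk'.isOpen_preimage.symm]
  change IsOpen (Quotient.mk (TnSetoid n) ⁻¹' (Quotient.mk (TnSetoid n) '' U))
  have : Quotient.mk (TnSetoid n) ⁻¹' (Quotient.mk (TnSetoid n) '' U) =
      ⋃ σ : Equiv.Perm (Fin n), permAct n σ '' U := by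
    ext p
    simp only [Set.mem_preimage, Set.mem_image, Set.mem_iUnion]
    constructor
    · rintro ⟨u, hu, h⟩
      obtain ⟨σ, rfl⟩ := (rel_iff_permAct n u p).mp (Quotient.exact h)
      exact ⟨σ, u, hu, rfl⟩
    · rintro ⟨σ, u, hu, rfl⟩
      exact ⟨u, hu, Quotient.sound ((rel_iff_permAct n u _).mpr ⟨σ, rfl⟩)⟩
  rw [this]
  exact isOpen_iUnion fun σ => (permHomeo n σ).isOpenMap U hU

open Complex in
/-- The rotation at time `t` on the ordered model. -/
noncomputable def rotOrd (n : ℕ) (t : ℝ) : TnOrdered n → TnOrdered n := fun p =>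
  ⟨((fun i => exp (2 * Real.pi * t * I) * p.1.1 i),
    exp (2 * Real.pi * t * I) * p.1.2.1,
    exp (n * Real.pi * t * I) * p.1.2.2), by
    obtain ⟨h1, h2, h3, h4, h5⟩ := p.2
    refine ⟨fun i j h => h1 (mul_left_cancel₀ (exp_ne_zero _) h), fun i => ?_, ?_, ?_, ?_⟩
    · simpa [map_mul, Complex.norm_exp] using h2 i
    · simpa [map_mul, Complex.norm_exp] using h3
    · exact mul_ne_zero (exp_ne_zero _) h4
    · have key : ∀ i : Fin n, exp (2 * Real.pi * t * I) * p.1.2.1 -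
          exp (2 * Real.pi * t * I) * p.1.1 i =
          exp (2 * Real.pi * t * I) * (p.1.2.1 - p.1.1 i) := fun i => by ring
      simp only [key, Finset.prod_mul_distrib, Finset.prod_const, Finset.card_univ,
        Fintype.card_fin]
      rw [mul_pow, h5, ← Complex.exp_nat_mul, ← Complex.exp_nat_mul]
      ring_nf⟩

lemma rotOrd_continuous (n : ℕ) :
    Continuous fun q : ℝ × TnOrdered n => rotOrd n q.1 q.2 := by
  apply Continuous.subtype_mk
  exact (by fun_prop : Continuous fun q : ℝ × TnOrdered n =>
    ((fun i => Complex.exp (2 * Real.pi * q.1 * Complex.I) *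
        (q.2 : (Fin n → ℂ) × ℂ × ℂ).1 i),
      Complex.exp (2 * Real.pi * q.1 * Complex.I) * (q.2 : (Fin n → ℂ) × ℂ × ℂ).2.1,
      Complex.exp (n * Real.pi * q.1 * Complex.I) * (q.2 : (Fin n → ℂ) × ℂ × ℂ).2.2))

lemma rotOrd_compat (n : ℕ) (t : ℝ) {p q : TnOrdered n} (h : (TnSetoid n).r p q) :
    (TnSetoid n).r (rotOrd n t p) (rotOrd n t q) := by
  obtain ⟨⟨σ, hσ⟩, h2⟩ := h
  refine ⟨⟨σ, ?_⟩, ?_⟩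
  · funext i
    simp [rotOrd, Function.comp_def]
    exact congrFun hσ i
  · simp [rotOrd, Prod.ext_iff] at h2 ⊢
    exact ⟨by rw [h2.1], by rw [h2.2]⟩

lemma rotOrd_zero (n : ℕ) (p : TnOrdered n) : rotOrd n 0 p = p := by
  apply Subtype.ext
  simp [rotOrd]

open Complex in
lemma rotOrd_one (n : ℕ) (hn : Odd n) (p : TnOrdered n) :
    rotOrd n 1 p = epsOrdered n p := by
  apply Subtype.ext
  have e1 : exp (2 * (Real.pi:ℂ) * I) = 1 := by
    rw [Complex.exp_two_pi_mul_I]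
  have e2 : exp ((n:ℂ) * (Real.pi:ℂ) * I) = -1 := by
    rw [show ((n:ℂ) * Real.pi * I) = n * (Real.pi * I) by ring,
      Complex.exp_nat_mul, Complex.exp_pi_mul_I, hn.neg_one_pow]
  simp [rotOrd, epsOrdered, e1, e2]

/-- The homotopy on the quotient. -/
noncomputable def rotTn (n : ℕ) (t : ℝ) : Tn n → Tn n :=
  Quotient.map (rotOrd n t) (fun _ _ => rotOrd_compat n t)


attribute [irreducible] rotOrd

lemma rot_cont (n : ℕ) :
    Continuous fun q : unitInterval × Tn n => rotTn n q.1 q.2 := by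
  have hq : IsOpenQuotientMap
      (Prod.map (id : unitInterval → unitInterval) (Quotient.mk (TnSetoid n))) :=
    IsOpenQuotientMap.id.prodMap (isOpenQuotientMap_mk n)
  refine hq.isQuotientMap.continuous_iff.mpr ?_
  have h2 : (fun q : unitInterval × Tn n => rotTn n q.1 q.2) ∘
      (Prod.map (id : unitInterval → unitInterval) (Quotient.mk (TnSetoid n))) =
      fun q : unitInterval × TnOrdered n => Quotient.mk (TnSetoid n) (rotOrd n q.1 q.2) := by
    funext q
    show rotTn n _ (Quotient.mk _ _) = _
    unfold rotTn
    rfl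
  change Continuous fun q : unitInterval × TnOrdered n => Quotient.mk (TnSetoid n) (rotOrd n q.1 q.2)
  have h3 : Continuous fun q : unitInterval × TnOrdered n => rotOrd n q.1 q.2 :=
    (rotOrd_continuous n).comp (continuous_subtype_val.prodMap continuous_id)
  exact continuous_quotient_mk'.comp h3


/-- For odd `n`, the nontrivial deck transformation `ε(q,x,y) = (q,x,-y)` of
the double cover `T_n → C_{n,1}(𝔻̄)` is homotopic to the identity of `T_n`. -/
theorem stmt_10 (n : ℕ) (hn : Odd n) :
    ContinuousMap.Homotopic (epsMap n) (ContinuousMap.id (Tn n)) := by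
  refine (ContinuousMap.Homotopic.symm ⟨?_⟩)
  refine
    { toFun := fun q => rotTn n q.1 q.2
      continuous_toFun := rot_cont n
      map_zero_left := ?_
      map_one_left := ?_ }
  · intro x
    induction x using Quotient.ind with
    | _ p =>
      show rotTn n ((0 : unitInterval) : ℝ) (Quotient.mk _ p) = Quotient.mk _ p
      unfold rotTn
      simp only [Quotient.map_mk, Set.Icc.coe_zero, rotOrd_zero]
      rfl
  · intro x
    induction x using Quotient.ind with
    | _ p =>
      show rotTn n ((1 : unitInterval) : ℝ) (Quotient.mk _ p) = epsMap n (Quotient.mk _ p)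
      unfold rotTn
      simp only [Quotient.map_mk, Set.Icc.coe_one, rotOrd_one n hn]
      rfl
end
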